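/- If z₀ ∈ ℂ ∖ ((−∞, ρ̂] ∪ [ρ, ∞)) satisfies ψ(z₀) = q, then z₀ = ζ or z₀ = ζ̂, and moreover q − 1/κ ≤ μ·Re(z₀). -/

import Mathlib

/-- If z₀ in the cut plane satisfies ψ(z₀) = q, then z₀ = ζ or z₀ = ζ̂,
and moreover q − 1/κ ≤ μ·Re(z₀). -/
theorem nig_solution_is_root_of_quadratic
    (κ σ q θ μ ρ ρhat d : ℝ) (ζ ζhat : ℂ)
    (hκ : 0 < κ) (hσ : 0 < σ) (hq : 0 < q)
    (hρ : ρ = (-θ + Real.sqrt (θ ^ 2 + σ ^ 2 / κ)) / σ ^ 2)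
    (hρhat : ρhat = (-θ - Real.sqrt (θ ^ 2 + σ ^ 2 / κ)) / σ ^ 2)
    (hd : d = θ ^ 2 + μ ^ 2 - 2 * θ * μ * (q * κ - 1) + q * σ ^ 2 * (2 - q * κ))
    (hζ : ζ = (((-θ - μ + κ * μ * q : ℝ) : ℂ) + (d : ℂ) ^ (1 / 2 : ℂ)) /
      (((κ * μ ^ 2 + σ ^ 2 : ℝ)) : ℂ))
    (hζhat : ζhat = (((-θ - μ + κ * μ * q : ℝ) : ℂ) - (d : ℂ) ^ (1 / 2 : ℂ)) /
      (((κ * μ ^ 2 + σ ^ 2 : ℝ)) : ℂ))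
    (ψ : ℂ → ℂ)
    (hψ : ∀ z : ℂ, ψ z =
      1 / (κ : ℂ) -
        (1 / (κ : ℂ)) *
          (1 - 2 * (κ : ℂ) * (θ : ℂ) * z - (κ : ℂ) * (σ : ℂ) ^ 2 * z ^ 2) ^ (1 / 2 : ℂ) +
        (μ : ℂ) * z)
    (z₀ : ℂ) (hz₀ : z₀.im ≠ 0 ∨ (ρhat < z₀.re ∧ z₀.re < ρ))
    (hsol : ψ z₀ = (q : ℂ)) :
    (z₀ = ζ ∨ z₀ = ζhat) ∧ q - 1 / κ ≤ μ * z₀.re := by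
  have hκ0 : (κ : ℂ) ≠ 0 := Complex.ofReal_ne_zero.2 hκ.ne'
  set w : ℂ := 1 - 2 * (κ : ℂ) * (θ : ℂ) * z₀ - (κ : ℂ) * (σ : ℂ) ^ 2 * z₀ ^ 2 with hw
  have half : (1 / 2 : ℂ) = (2⁻¹ : ℂ) := by norm_num
  have hsol' : w ^ (1 / 2 : ℂ) = 1 - (κ : ℂ) * q + (κ : ℂ) * μ * z₀ := by
    have := hsol
    rw [hψ z₀] at this
    field_simp at this ⊢
    rw [show w = 1 - (κ : ℂ) * 2 * (θ : ℂ) * z₀ - (κ : ℂ) * z₀ ^ 2 * (σ : ℂ) ^ 2 by rw [hw]; ring]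
    linear_combination -this
  -- inequality
  have hre : (0 : ℝ) ≤ (w ^ (1 / 2 : ℂ)).re := by
    rw [half, Complex.cpow_inv_two_re]
    exact Real.sqrt_nonneg _
  have hineq : q - 1 / κ ≤ μ * z₀.re := by
    rw [hsol'] at hre
    simp [Complex.add_re, Complex.sub_re, Complex.mul_re] at hre
    have h1 : 1 / κ * κ = 1 := by field_simp
    nlinarith [hre, hκ, h1]
  refine ⟨?_, hineq⟩
  -- squaring
  have hsq : w = (1 - (κ : ℂ) * q + (κ : ℂ) * μ * z₀) ^ 2 := by
    rw [← hsol', half, Complex.cpow_ofNat_inv_pow]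
  have he : ((d : ℂ) ^ (1 / 2 : ℂ)) ^ 2 = (d : ℂ) := by
    rw [half, Complex.cpow_ofNat_inv_pow]
  set e : ℂ := (d : ℂ) ^ (1 / 2 : ℂ) with hee
  have ha : ((κ * μ ^ 2 + σ ^ 2 : ℝ) : ℂ) ≠ 0 := by
    have : (0:ℝ) < κ * μ ^ 2 + σ ^ 2 := by positivity
    exact_mod_cast Complex.ofReal_ne_zero.2 this.ne'
  set a : ℂ := ((κ * μ ^ 2 + σ ^ 2 : ℝ) : ℂ) with haa
  set b : ℂ := ((-θ - μ + κ * μ * q : ℝ) : ℂ) with hbb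
  have key : (κ : ℂ) * ((a * z₀ - b - e) * (a * z₀ - b + e)) = 0 := by
    rw [hw] at hsq
    have hdc : (d : ℂ) = (θ:ℂ) ^ 2 + (μ:ℂ) ^ 2 - 2 * θ * μ * ((q:ℂ) * κ - 1)
        + q * (σ:ℂ) ^ 2 * (2 - (q:ℂ) * κ) := by rw [hd]; push_cast; ring
    have hac : a = (κ:ℂ) * (μ:ℂ) ^ 2 + (σ:ℂ) ^ 2 := by rw [haa]; push_cast; ring
    have hbc : b = -(θ:ℂ) - μ + (κ:ℂ) * μ * q := by rw [hbb]; push_cast; ring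
    rw [hac, hbc]
    linear_combination (-(κ:ℂ) * (μ:ℂ)^2 - (σ:ℂ)^2) * hsq - (κ:ℂ) * he - (κ:ℂ) * hdc
  have key2 : (a * z₀ - b - e) * (a * z₀ - b + e) = 0 := by
    rcases mul_eq_zero.1 key with h | h
    · exact absurd h hκ0
    · exact h
  rcases mul_eq_zero.1 key2 with h | h
  · left
    rw [hζ, eq_div_iff ha]
    linear_combination h
  · right
    rw [hζhat, eq_div_iff ha]
    linear_combination h
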